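/- There is no integer α ∉ {0, 1} such that both α and 2α - 1 are perfect cubes. Equivalently, the equation 2u^3 - v^3 = 1 in integers u, v has only the solutions (u,v) = (1,1) and (0,-1). -/

import Mathlib

/-- Eisenstein integers `a + b ω` with `ω ^ 2 = -1 - ω`. -/
@[ext] structure Eis where
  re : ℤ
  im : ℤ
deriving DecidableEq

namespace Eis

instance : Zero Eis := ⟨⟨0, 0⟩⟩
instance : One Eis := ⟨⟨1, 0⟩⟩
instance : Add Eis := ⟨fun x y => ⟨x.re + y.re, x.im + y.im⟩⟩
instance : Neg Eis := ⟨fun x => ⟨-x.re, -x.im⟩⟩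
instance : Mul Eis := ⟨fun x y =>
  ⟨x.re * y.re - x.im * y.im, x.re * y.im + x.im * y.re - x.im * y.im⟩⟩

@[simp] lemma zero_re : (0 : Eis).re = 0 := rfl
@[simp] lemma zero_im : (0 : Eis).im = 0 := rfl
@[simp] lemma one_re : (1 : Eis).re = 1 := rfl
@[simp] lemma one_im : (1 : Eis).im = 0 := rfl
@[simp] lemma add_re (x y : Eis) : (x + y).re = x.re + y.re := rfl
@[simp] lemma add_im (x y : Eis) : (x + y).im = x.im + y.im := rfl
@[simp] lemma neg_re (x : Eis) : (-x).re = -x.re := rfl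
@[simp] lemma neg_im (x : Eis) : (-x).im = -x.im := rfl
@[simp] lemma mul_re (x y : Eis) : (x * y).re = x.re * y.re - x.im * y.im := rfl
@[simp] lemma mul_im (x y : Eis) :
    (x * y).im = x.re * y.im + x.im * y.re - x.im * y.im := rfl

instance commRing : CommRing Eis where
  add_assoc := by intros; ext <;> simp <;> ring
  zero_add := by intros; ext <;> simp
  add_zero := by intros; ext <;> simp
  add_comm := by intros; ext <;> simp <;> ring
  mul_assoc := by intros; ext <;> simp <;> ring
  one_mul := by intros; ext <;> simp
  mul_one := by intros; ext <;> simp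
  left_distrib := by intros; ext <;> simp <;> ring
  right_distrib := by intros; ext <;> simp <;> ring
  zero_mul := by intros; ext <;> simp
  mul_zero := by intros; ext <;> simp
  mul_comm := by intros; ext <;> simp <;> ring
  neg_add_cancel := by intros; ext <;> simp
  nsmul := nsmulRec
  zsmul := zsmulRec

@[simp] lemma sub_re (x y : Eis) : (x - y).re = x.re - y.re := rfl
@[simp] lemma sub_im (x y : Eis) : (x - y).im = x.im - y.im := rfl

instance : Nontrivial Eis := ⟨⟨0, 1, by decide⟩⟩

/-- The norm `a^2 - a*b + b^2`. -/
def norm (x : Eis) : ℤ := x.re ^ 2 - x.re * x.im + x.im ^ 2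

lemma norm_mul (x y : Eis) : norm (x * y) = norm x * norm y := by
  simp [norm]; ring

lemma norm_nonneg (x : Eis) : 0 ≤ norm x := by
  have := sq_nonneg (2 * x.re - x.im); have := sq_nonneg x.im
  simp [norm] at *; nlinarith

lemma norm_eq_zero {x : Eis} (h : norm x = 0) : x = 0 := by
  have h1 := sq_nonneg (2 * x.re - x.im)
  have h0 : (2 * x.re - x.im) ^ 2 + 3 * x.im ^ 2 = 0 := by
    simp only [norm] at h; ring_nf; ring_nf at h; nlinarith
  have him2 : x.im ^ 2 = 0 := by nlinarith [sq_nonneg x.im]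
  have him : x.im = 0 := by
    have := sq_eq_zero_iff.mp him2; exact this
  have hre : x.re = 0 := by
    have h3 : (2 * x.re) ^ 2 = 0 := by rw [him] at h0; nlinarith
    have := sq_eq_zero_iff.mp h3; linarith
  ext <;> simp [hre, him]

/-- conjugate -/
def conj (x : Eis) : Eis := ⟨x.re - x.im, -x.im⟩

lemma mul_conj (x : Eis) : x * conj x = ⟨norm x, 0⟩ := by
  ext <;> simp [conj, norm] <;> ring

/-- rounded division of integers -/
def dnear (a n : ℤ) : ℤ := (2 * a + n) / (2 * n)

lemma dnear_est {n : ℤ} (hn : 0 < n) (a : ℤ) : 2 * |a - n * dnear a n| ≤ n := by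
  have h2n : (0:ℤ) < 2 * n := by linarith
  have h1 := Int.mul_ediv_add_emod (2 * a + n) (2 * n)
  have h2 := Int.emod_nonneg (2 * a + n) (by positivity : (2 * n : ℤ) ≠ 0)
  have h3 := Int.emod_lt_of_pos (2 * a + n) h2n
  have hs : 2 * (a - n * dnear a n) = (2 * a + n) % (2 * n) - n := by
    have : dnear a n = (2 * a + n) / (2 * n) := rfl
    rw [this]; linarith [h1]
  rcases abs_cases (a - n * dnear a n) with ⟨he, _⟩ | ⟨he, _⟩ <;> rw [he] <;> linarith

instance : Div Eis :=
  ⟨fun x y => ⟨dnear (x * conj y).re (norm y), dnear (x * conj y).im (norm y)⟩⟩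

lemma div_def (x y : Eis) :
    x / y = ⟨dnear (x * conj y).re (norm y), dnear (x * conj y).im (norm y)⟩ := rfl

instance : Mod Eis := ⟨fun x y => x - y * (x / y)⟩

lemma mod_def (x y : Eis) : x % y = x - y * (x / y) := rfl

lemma norm_mod_lt (x : Eis) {y : Eis} (hy : y ≠ 0) : norm (x % y) < norm y := by
  have hn : 0 < norm y := lt_of_le_of_ne (norm_nonneg y) (fun h => hy (norm_eq_zero h.symm))
  set n := norm y with hnn
  set q := x / y with hq
  -- key : (x % y) * conj y has small coordinates
  have key : (x % y) * conj y =
      ⟨(x * conj y).re - n * q.re, (x * conj y).im - n * q.im⟩ := by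
    have h1 : (x % y) * conj y = x * conj y - (⟨n, 0⟩ : Eis) * q := by
      rw [mod_def, sub_mul, ← mul_conj y]; ring
    rw [h1]; ext <;> simp <;> ring
  have hA := dnear_est hn (x * conj y).re
  have hB := dnear_est hn (x * conj y).im
  have hqre : q.re = dnear (x * conj y).re n := rfl
  have hqim : q.im = dnear (x * conj y).im n := rfl
  set A := (x * conj y).re - n * q.re with hA2
  set B := (x * conj y).im - n * q.im with hB2
  have hA' : 2 * |A| ≤ n := by rw [hA2, hqre]; exact hA
  have hB' : 2 * |B| ≤ n := by rw [hB2, hqim]; exact hB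
  have hcy : norm (conj y) = n := by
    rw [hnn]; simp only [norm, conj]; ring
  have hnm : norm (x % y) * n = A ^ 2 - A * B + B ^ 2 := by
    have h := norm_mul (x % y) (conj y)
    rw [key, hcy] at h
    rw [← h]; simp only [norm]
  have habs : A ^ 2 - A * B + B ^ 2 < n * n := by
    have h1 : |A| ^ 2 = A ^ 2 := sq_abs A
    have h2 : |B| ^ 2 = B ^ 2 := sq_abs B
    have h3 : -(A*B) ≤ |A| * |B| := by
      calc -(A*B) ≤ |A*B| := neg_le_abs _
      _ = |A| * |B| := abs_mul A B
    nlinarith [abs_nonneg A, abs_nonneg B]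
  have h9 : norm (x % y) * n < n * n := by rw [hnm]; exact habs
  exact lt_of_mul_lt_mul_right (by linarith) (le_of_lt hn)

lemma norm_natAbs_lt (x : Eis) {y : Eis} (hy : y ≠ 0) :
    (norm (x % y)).natAbs < (norm y).natAbs := by
  have h := norm_mod_lt x hy
  have h1 := norm_nonneg (x % y)
  omega

instance euclideanDomain : EuclideanDomain Eis where
  quotient := (· / ·)
  quotient_zero := fun x => by
    ext <;> simp [div_def, dnear, norm]
  remainder := (· % ·)
  quotient_mul_add_remainder_eq := fun x y => by
    show y * (x / y) + (x % y) = x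
    rw [mod_def]; ring
  r := fun a b => (norm a).natAbs < (norm b).natAbs
  r_wellFounded := (measure fun x : Eis => (norm x).natAbs).wf
  remainder_lt := fun a b hb => norm_natAbs_lt a hb
  mul_left_not_lt := fun a b hb => by
    show ¬(norm (a * b)).natAbs < (norm a).natAbs
    rw [norm_mul, Int.natAbs_mul]
    have h1 : 0 < (norm b).natAbs := by
      have : norm b ≠ 0 := fun h => hb (norm_eq_zero h)
      omega
    have h2 : 0 ≤ norm a := norm_nonneg a
    exact Nat.not_lt.2 (Nat.le_mul_of_pos_right _ h1)

end Eis

namespace Eis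

lemma norm_dvd_norm {x y : Eis} (h : x ∣ y) : norm x ∣ norm y := by
  obtain ⟨c, rfl⟩ := h; rw [norm_mul]; exact dvd_mul_right _ _

lemma isUnit_of_norm_eq_one {x : Eis} (h : norm x = 1) : IsUnit x := by
  refine IsUnit.of_mul_eq_one (conj x) ?_
  rw [mul_conj, h]; rfl

lemma norm_eq_one_of_isUnit {x : Eis} (h : IsUnit x) : norm x = 1 := by
  obtain ⟨u, rfl⟩ := h
  have h1 : norm (u : Eis) * norm ((u⁻¹ : Eisˣ) : Eis) = 1 := by
    rw [← norm_mul]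
    have : (u : Eis) * ((u⁻¹ : Eisˣ) : Eis) = 1 := u.mul_inv
    rw [this]; simp [norm]
  have h2 := norm_nonneg (u : Eis)
  have hd : norm (u : Eis) ∣ 1 := Dvd.intro _ h1
  exact Int.eq_one_of_dvd_one h2 hd

lemma unit_enum {x : Eis} (h : norm x = 1) :
    x = ⟨1, 0⟩ ∨ x = ⟨-1, 0⟩ ∨ x = ⟨0, 1⟩ ∨ x = ⟨0, -1⟩ ∨ x = ⟨1, 1⟩ ∨ x = ⟨-1, -1⟩ := by
  obtain ⟨a, b⟩ := x
  simp only [norm] at h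
  simp only [Eis.mk.injEq]
  have h4 : (2 * a - b) ^ 2 + 3 * b ^ 2 = 4 := by ring_nf; ring_nf at h; nlinarith
  have hb1 : -1 ≤ b := by nlinarith [sq_nonneg (2*a-b), sq_nonneg (b+1)]
  have hb2 : b ≤ 1 := by nlinarith [sq_nonneg (2*a-b), sq_nonneg (b-1)]
  have ha1 : -1 ≤ a := by nlinarith [sq_nonneg (2*b-a), sq_nonneg (a+1)]
  have ha2 : a ≤ 1 := by nlinarith [sq_nonneg (2*b-a), sq_nonneg (a-1)]
  interval_cases a <;> interval_cases b <;> omega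

end Eis

/-- coprime integers whose product is a cube are both cubes -/
lemma int_cube_of_coprime {a b c : ℤ} (h : IsCoprime a b) (e : a * b = c ^ 3) :
    ∃ a', a = a' ^ 3 := by
  have hu : IsUnit (gcd a b) :=
    h.isUnit_of_dvd' (gcd_dvd_left a b) (gcd_dvd_right a b)
  obtain ⟨d, hd⟩ := exists_associated_pow_of_mul_eq_pow hu e
  rcases Int.associated_iff.mp hd with h1 | h1
  · exact ⟨d, h1.symm⟩
  · refine ⟨-d, ?_⟩
    have h2 : (-d) ^ 3 = -(d ^ 3) := by ring
    rw [h2, h1]; ring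

lemma int_cube_of_coprime' {a b c : ℤ} (h : IsCoprime a b) (e : a * b = c ^ 3) :
    (∃ a', a = a' ^ 3) ∧ ∃ b', b = b' ^ 3 :=
  ⟨int_cube_of_coprime h e, int_cube_of_coprime h.symm (by rw [mul_comm] at e; exact e)⟩

lemma cube_eq_cube {a b : ℤ} (h : a ^ 3 = b ^ 3) : a = b :=
  (Odd.strictMono_pow (R := ℤ) ⟨1, by norm_num⟩).injective h

lemma odd_of_odd_cube {b : ℤ} (h : Odd (b ^ 3)) : Odd b := by
  by_contra hb
  rw [Int.not_odd_iff_even] at hb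
  rw [← Int.not_even_iff_odd] at h
  obtain ⟨k, rfl⟩ := hb
  exact h ⟨4 * k ^ 3, by ring⟩

lemma coprime_of_prime_not_dvd {p n : ℤ} (hp : Prime p) (h : ¬ p ∣ n) : IsCoprime p n := by
  rw [Int.isCoprime_iff_gcd_eq_one]
  have hp' : p.natAbs.Prime := Int.prime_iff_natAbs_prime.mp hp
  have h' : ¬ p.natAbs ∣ n.natAbs := fun hd => h (Int.natAbs_dvd_natAbs.mp hd)
  exact (Nat.Prime.coprime_iff_not_dvd hp').mpr h'

/-- three pairwise coprime integers with product a cube are all cubes -/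
lemma cube3 {g v w a : ℤ} (h : g * v * w = a ^ 3) (cgv : IsCoprime g v)
    (cgw : IsCoprime g w) (cvw : IsCoprime v w) :
    ∃ r s t : ℤ, g = r ^ 3 ∧ v = s ^ 3 ∧ w = t ^ 3 := by
  obtain ⟨t, ht⟩ := int_cube_of_coprime (cgw.mul_left cvw).symm
    (by rw [mul_comm]; exact h)
  obtain ⟨r, hr⟩ := int_cube_of_coprime (cgv.mul_right cgw)
    (by rw [← mul_assoc]; exact h)
  obtain ⟨s, hs⟩ := int_cube_of_coprime (cvw.mul_right cgv.symm)
    (by rw [← h]; ring)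
  exact ⟨r, s, t, hr, hs, ht⟩

section CubeParam

lemma even_sub' {a b : ℤ} (ha : Even a) (hb : Even b) : Even (a - b) := by
  obtain ⟨x, rfl⟩ := ha; obtain ⟨y, rfl⟩ := hb; exact ⟨x - y, by ring⟩

/-- parity helper -/
lemma parityAB {c d : ℤ} (h : ¬(Even c ∧ Even d)) :
    Odd (c ^ 3 - 3 * c * d ^ 2 + d ^ 3) ∧ Even (3 * c ^ 2 * d - 3 * c * d ^ 2) := by
  have h3odd : Odd (3 : ℤ) := ⟨1, by norm_num⟩
  rcases Int.even_or_odd c with hc | hc <;> rcases Int.even_or_odd d with hd | hd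
  · exact absurd ⟨hc, hd⟩ h
  · -- c even, d odd
    constructor
    · have h1 : Even (c ^ 3) := by
        have := hc.mul_right (c ^ 2); rwa [show c * c ^ 2 = c ^ 3 by ring] at this
      have h2 : Even (3 * c * d ^ 2) := by
        have := hc.mul_right (3 * d ^ 2); rwa [show c * (3 * d ^ 2) = 3 * c * d ^ 2 by ring] at this
      exact (even_sub' h1 h2).add_odd hd.pow
    · obtain ⟨k, rfl⟩ := hc
      exact ⟨3 * (k + k) * k * d - 3 * k * d ^ 2, by ring⟩
  · -- c odd, d even
    constructor
    · have h2 : Even (3 * c * d ^ 2) := by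
        have := hd.mul_right (3 * c * d); rwa [show d * (3 * c * d) = 3 * c * d ^ 2 by ring] at this
      have h3 : Even (d ^ 3) := by
        have := hd.mul_right (d ^ 2); rwa [show d * d ^ 2 = d ^ 3 by ring] at this
      exact (hc.pow.sub_even h2).add_even h3
    · obtain ⟨l, rfl⟩ := hd
      exact ⟨3 * c ^ 2 * l - 3 * c * (l + l) * l, by ring⟩
  · -- both odd
    constructor
    · have h2 : Odd (3 * c * d ^ 2) := (h3odd.mul hc).mul hd.pow
      exact (hc.pow.sub_odd h2).add_odd hd.pow
    · obtain ⟨k, hk⟩ := hc; obtain ⟨l, hl⟩ := hd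
      exact ⟨3 * c * d * (k - l), by rw [hk, hl]; ring⟩

/-- The key parametrization lemma. -/
lemma cube_param {X Y b : ℤ} (hX : Odd X) (hY : Odd Y) (hco : IsCoprime X Y)
    (hb : X ^ 2 - X * Y + Y ^ 2 = b ^ 3) :
    ∃ c d : ℤ, X = c ^ 3 - 3 * c * d ^ 2 + d ^ 3 ∧ Y = c ^ 3 - 3 * c ^ 2 * d + d ^ 3 ∧
      b = c ^ 2 - c * d + d ^ 2 := by
  have hbodd : Odd b := by
    apply odd_of_odd_cube
    obtain ⟨m, hm⟩ := hX; obtain ⟨l, hl⟩ := hY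
    exact ⟨2*m^2 + 2*l^2 - 2*m*l + m + l, by rw [← hb, hm, hl]; ring⟩
  have hprime3 : Prime (3 : ℤ) := by norm_num
  have h3b : ¬ (3:ℤ) ∣ b := by
    intro h3
    obtain ⟨b1, rfl⟩ := h3
    have h1 : (3:ℤ) ∣ (X + Y) ^ 2 := ⟨9 * b1 ^ 3 + X * Y, by linear_combination hb⟩
    have h2 : (3:ℤ) ∣ X + Y := hprime3.dvd_of_dvd_pow h1
    obtain ⟨w, hw⟩ := h2
    have hYw : Y = 3 * w - X := by linarith
    have key : X ^ 2 - 3 * w * X + 3 * w ^ 2 = 9 * b1 ^ 3 := by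
      have h5 : 3 * (X ^ 2 - 3 * w * X + 3 * w ^ 2) = 3 * (9 * b1 ^ 3) := by
        rw [hYw] at hb; linear_combination hb
      exact mul_left_cancel₀ (by norm_num : (3:ℤ) ≠ 0) h5
    have h6 : (3:ℤ) ∣ X ^ 2 := ⟨3 * b1 ^ 3 + w * X - w ^ 2, by linear_combination key⟩
    have h7 : (3:ℤ) ∣ X := hprime3.dvd_of_dvd_pow h6
    have h8 : (3:ℤ) ∣ Y := by rw [hYw]; exact Dvd.dvd.sub ⟨w, rfl⟩ h7
    obtain ⟨u, v, huv⟩ := hco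
    obtain ⟨x1, hx1⟩ := h7; obtain ⟨y1, hy1⟩ := h8
    have : (3:ℤ) ∣ 1 := ⟨u * x1 + v * y1, by rw [← huv, hx1, hy1]; ring⟩
    norm_num at this
  have hbne : b ≠ 0 := by rintro rfl; simp at hbodd
  have hb3 : ((⟨b, 0⟩ : Eis)) ^ 3 = ⟨b ^ 3, 0⟩ := by
    ext <;> simp [pow_succ] <;> ring
  have hππ' : (⟨X, X - Y⟩ : Eis) * ⟨Y, Y - X⟩ = (⟨b, 0⟩ : Eis) ^ 3 := by
    rw [hb3]; ext <;> simp
    · linear_combination hb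
    · ring
  have hNπ : Eis.norm ⟨X, X - Y⟩ = b ^ 3 := by
    simp only [Eis.norm]; linear_combination hb
  have hπne : (⟨X, X - Y⟩ : Eis) ≠ 0 := by
    intro h0
    rw [h0] at hNπ
    simp [Eis.norm] at hNπ
    exact hbne ((pow_eq_zero_iff (by norm_num : 3 ≠ 0)).mp hNπ.symm)
  letI : GCDMonoid Eis := EuclideanDomain.gcdMonoid Eis
  have hgu : IsUnit (gcd (⟨X, X - Y⟩ : Eis) ⟨Y, Y - X⟩) := by
    set g := gcd (⟨X, X - Y⟩ : Eis) ⟨Y, Y - X⟩ with hg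
    have hgπ : g ∣ ⟨X, X - Y⟩ := gcd_dvd_left _ _
    have hgπ' : g ∣ ⟨Y, Y - X⟩ := gcd_dvd_right _ _
    have hd1 : Eis.norm g ∣ b ^ 3 := hNπ ▸ Eis.norm_dvd_norm hgπ
    have hsum : (⟨X, X - Y⟩ : Eis) + ⟨Y, Y - X⟩ = ⟨X + Y, 0⟩ := by ext <;> simp
    have hdiff : (⟨X, X - Y⟩ : Eis) - ⟨Y, Y - X⟩ = ⟨X - Y, 2 * (X - Y)⟩ := by
      ext <;> simp <;> ring
    have hd2 : Eis.norm g ∣ (X + Y) ^ 2 := by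
      have h := Eis.norm_dvd_norm (dvd_add hgπ hgπ')
      rw [hsum] at h
      have h2 : Eis.norm (⟨X + Y, 0⟩ : Eis) = (X + Y) ^ 2 := by simp [Eis.norm]
      rwa [h2] at h
    have hd3 : Eis.norm g ∣ 3 * (X - Y) ^ 2 := by
      have h := Eis.norm_dvd_norm (dvd_sub hgπ hgπ')
      rw [hdiff] at h
      have h2 : Eis.norm (⟨X - Y, 2 * (X - Y)⟩ : Eis) = 3 * (X - Y) ^ 2 := by
        simp [Eis.norm]; ring
      rwa [h2] at h
    have hgnn := Eis.norm_nonneg g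
    set n := (Eis.norm g).natAbs with hn
    have hEn : (n : ℤ) = Eis.norm g := Int.natAbs_of_nonneg hgnn
    have hne0 : n ≠ 0 := by
      intro h0
      have h00 : Eis.norm g = 0 := by omega
      rw [Eis.norm_eq_zero h00] at hgπ
      exact hπne (zero_dvd_iff.mp hgπ)
    have hn1 : n = 1 := by
      by_contra hne1
      set p := n.minFac with hp
      have hpp : p.Prime := Nat.minFac_prime hne1
      have hpInt : Prime (p : ℤ) := Nat.prime_iff_prime_int.mp hpp
      have hpn : (p : ℤ) ∣ Eis.norm g := by
        rw [← hEn]; exact_mod_cast Int.natCast_dvd_natCast.mpr (Nat.minFac_dvd n)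
      have hpb : (p : ℤ) ∣ b := hpInt.dvd_of_dvd_pow (hpn.trans hd1)
      have hpodd : p ≠ 2 := by
        intro h2
        rw [h2] at hpb
        obtain ⟨bb, hbb⟩ := hpb
        obtain ⟨o, ho⟩ := hbodd
        omega
      have hp3 : p ≠ 3 := by
        intro h3
        rw [h3] at hpb
        exact h3b (by exact_mod_cast hpb)
      have hpXY : (p : ℤ) ∣ X + Y := hpInt.dvd_of_dvd_pow (hpn.trans hd2)
      have hpXY' : (p : ℤ) ∣ X - Y := by
        rcases hpInt.dvd_mul.mp (hpn.trans hd3) with h | h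
        · exfalso
          have : p ∣ 3 := by exact_mod_cast h
          rcases (Nat.dvd_prime (by norm_num)).mp this with h1 | h1
          · exact hpp.one_lt.ne' h1
          · exact hp3 h1
        · exact hpInt.dvd_of_dvd_pow h
      have hpX : (p : ℤ) ∣ X := by
        have h2X : (p : ℤ) ∣ 2 * X := by
          obtain ⟨s, hs⟩ := hpXY; obtain ⟨t, ht⟩ := hpXY'
          exact ⟨s + t, by linear_combination hs + ht⟩
        rcases hpInt.dvd_mul.mp h2X with h | h
        · exfalso
          have : p ∣ 2 := by exact_mod_cast h
          rcases (Nat.dvd_prime (by norm_num)).mp this with h1 | h1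
          · exact hpp.one_lt.ne' h1
          · exact hpodd h1
        · exact h
      have hpY : (p : ℤ) ∣ Y := by
        obtain ⟨s, hs⟩ := hpXY; obtain ⟨t, ht⟩ := hpX
        exact ⟨s - t, by linear_combination hs - ht⟩
      obtain ⟨u, v, huv⟩ := hco
      have : (p : ℤ) ∣ 1 := by
        obtain ⟨s, hs⟩ := hpX; obtain ⟨t, ht⟩ := hpY
        exact ⟨u * s + v * t, by rw [← huv, hs, ht]; ring⟩
      exact hpInt.not_dvd_one this
    apply Eis.isUnit_of_norm_eq_one
    omega
  obtain ⟨γ, u, hu2⟩ := exists_associated_pow_of_mul_eq_pow hgu hππ'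
  obtain ⟨c, d⟩ := γ
  have hγ3 : ((⟨c, d⟩ : Eis)) ^ 3 =
      ⟨c ^ 3 - 3 * c * d ^ 2 + d ^ 3, 3 * c ^ 2 * d - 3 * c * d ^ 2⟩ := by
    ext <;> simp [pow_succ] <;> ring
  have hNu : Eis.norm (u : Eis) = 1 := Eis.norm_eq_one_of_isUnit u.isUnit
  have hNγ : Eis.norm ⟨c, d⟩ = b := by
    apply cube_eq_cube
    have h1 : Eis.norm ((⟨c, d⟩ : Eis) ^ 3 * u) = Eis.norm ⟨X, X - Y⟩ := by rw [hu2]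
    rw [Eis.norm_mul, hNu, mul_one] at h1
    have h2 : Eis.norm ((⟨c, d⟩ : Eis) ^ 3) = (Eis.norm ⟨c, d⟩) ^ 3 := by
      rw [show ((⟨c, d⟩:Eis)) ^ 3 = ⟨c,d⟩ * ⟨c,d⟩ * ⟨c,d⟩ by ring, Eis.norm_mul, Eis.norm_mul]
      ring
    rw [h2] at h1
    rw [h1, hNπ]
  have hNγval : c ^ 2 - c * d + d ^ 2 = b := by
    rw [← hNγ]; simp [Eis.norm]
  have hcd : ¬(Even c ∧ Even d) := by
    rintro ⟨⟨k, hk⟩, ⟨l, hl⟩⟩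
    obtain ⟨o, ho⟩ := hbodd
    rw [hk, hl] at hNγval
    have hbe : b = 2 * (2*k^2 - 2*k*l + 2*l^2) := by linear_combination - hNγval
    omega
  obtain ⟨hAodd, hBeven⟩ := parityAB hcd
  have hXYeven : Even (X - Y) := hX.sub_odd hY
  rw [hγ3] at hu2
  rcases Eis.unit_enum hNu with hui | hui | hui | hui | hui | hui <;> rw [hui] at hu2 <;>
    have hre := congrArg Eis.re hu2 <;> have him := congrArg Eis.im hu2 <;>
    simp only [Eis.mul_re, Eis.mul_im] at hre him
  · refine ⟨c, d, ?_, ?_, hNγval.symm⟩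
    · linear_combination - hre
    · linear_combination him - hre
  · refine ⟨-c, -d, ?_, ?_, ?_⟩
    · linear_combination - hre
    · linear_combination him - hre
    · linear_combination - hNγval
  · exfalso
    have hodd : Odd (X - Y) := by
      have hE : X - Y = (c^3 - 3*c*d^2 + d^3) - (3*c^2*d - 3*c*d^2) := by
        linear_combination - him
      rw [hE]; exact hAodd.sub_even hBeven
    exact (Int.not_odd_iff_even.mpr hXYeven) hodd
  · exfalso
    have hodd : Odd (X - Y) := by
      have hE : X - Y = (3*c^2*d - 3*c*d^2) - (c^3 - 3*c*d^2 + d^3) := by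
        linear_combination - him
      rw [hE]; exact hBeven.sub_odd hAodd
    exact (Int.not_odd_iff_even.mpr hXYeven) hodd
  · exfalso
    have hodd : Odd (X - Y) := by
      have hE : X - Y = c^3 - 3*c*d^2 + d^3 := by linear_combination - him
      rw [hE]; exact hAodd
    exact (Int.not_odd_iff_even.mpr hXYeven) hodd
  · exfalso
    have hodd : Odd (X - Y) := by
      have hE : X - Y = -(c^3 - 3*c*d^2 + d^3) := by linear_combination - him
      rw [hE]; exact hAodd.neg
    exact (Int.not_odd_iff_even.mpr hXYeven) hodd


end CubeParam

section Descent

lemma coprime_of_gcd_dvd_three {u v : ℤ} (h : (Int.gcd u v : ℤ) ∣ 3)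
    (hu : ¬ (3:ℤ) ∣ u) : IsCoprime u v := by
  rw [Int.isCoprime_iff_gcd_eq_one]
  have h3 : Int.gcd u v ∣ 3 := by exact_mod_cast h
  rcases (Nat.dvd_prime Nat.prime_three).mp h3 with h1 | h1
  · exact h1
  · exfalso; apply hu
    have := Int.gcd_dvd_left (a := u) (b := v)
    rwa [h1] at this
    
lemma gcd_dvd_three {f g c d : ℤ} (hcd : IsCoprime c d)
    (h1 : (Int.gcd f g : ℤ) ∣ 3 * c) (h2 : (Int.gcd f g : ℤ) ∣ 3 * d) :
    (Int.gcd f g : ℤ) ∣ 3 := by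
  obtain ⟨u, v, huv⟩ := hcd
  obtain ⟨a, ha⟩ := h1; obtain ⟨b, hb⟩ := h2
  exact ⟨u * a + v * b, by linear_combination u * ha + v * hb - 3 * huv⟩

lemma isCoprime_pow3 {s t : ℤ} (h : IsCoprime (s ^ 3) (t ^ 3)) : IsCoprime s t :=
  (h.of_isCoprime_of_dvd_left (dvd_pow_self s (by norm_num))).of_isCoprime_of_dvd_right
    (dvd_pow_self t (by norm_num))

lemma size_step {z r1 b : ℤ} (hz2 : 2 ≤ |z|) (hr6 : r1 ^ 6 ≤ b) (hbz : b ≤ |z|) :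
    r1.natAbs < z.natAbs := by
  by_contra h
  push_neg at h
  have h1 : |z| ≤ |r1| := by
    rw [Int.abs_eq_natAbs, Int.abs_eq_natAbs]; exact_mod_cast h
  have h2 : |z| ^ 6 ≤ |r1| ^ 6 := pow_le_pow_left₀ (abs_nonneg z) h1 6
  have h3 : |r1| ^ 6 = r1 ^ 6 := (pow_abs r1 6).trans (abs_of_nonneg (by positivity))
  have h4 : |z| ^ 6 ≤ |z| := by linarith
  have h5 : (2:ℤ) ^ 5 ≤ |z| ^ 5 := pow_le_pow_left₀ (by norm_num) hz2 5
  have h6 : (2:ℤ)^5 * |z| ≤ |z| ^ 5 * |z| :=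
    mul_le_mul h5 (le_refl _) (by linarith) (by positivity)
  have h7 : |z| ^ 5 * |z| = |z| ^ 6 := by ring
  linarith

lemma b_le_abs {z a b : ℤ} (hz : z = a * b) (ha : a ≠ 0) (hb : 1 ≤ b) : b ≤ |z| := by
  rw [hz, abs_mul]
  have h1 : 1 ≤ |a| := Int.one_le_abs (by exact_mod_cast ha)
  have h2 : |b| = b := abs_of_nonneg (by linarith)
  nlinarith [abs_nonneg b]

set_option maxHeartbeats 1000000 in
/-- The main descent: `x³ + y³ = 2z³` with `x, y` coprime and `z ≠ 0` forces `x = y`. -/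
lemma descent (n : ℕ) : ∀ x y z : ℤ, z ≠ 0 → z.natAbs ≤ n → IsCoprime x y →
    x ^ 3 + y ^ 3 = 2 * z ^ 3 → x = y := by
  induction n using Nat.strong_induction_on with
  | _ n IH =>
  intro x y z hz hzn hco heq
  have hprime3 : Prime (3 : ℤ) := by norm_num
  -- x and y are both odd
  have hodd : Odd x ∧ Odd y := by
    rcases Int.even_or_odd x with hx | hx <;> rcases Int.even_or_odd y with hy | hy
    · exfalso
      obtain ⟨u, v, huv⟩ := hco; obtain ⟨a, ha⟩ := hx; obtain ⟨b, hb⟩ := hy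
      have : (2:ℤ) ∣ 1 := ⟨u*a + v*b, by rw [← huv, ha, hb]; ring⟩
      norm_num at this
    · exfalso
      obtain ⟨a, rfl⟩ := hx
      have h1 : Even (y ^ 3) := ⟨z^3 - 4*a^3, by linear_combination heq⟩
      exact (Int.not_odd_iff_even.mpr h1) hy.pow
    · exfalso
      obtain ⟨b, rfl⟩ := hy
      have h1 : Even (x ^ 3) := ⟨z^3 - 4*b^3, by linear_combination heq⟩
      exact (Int.not_odd_iff_even.mpr h1) hx.pow
    · exact ⟨hx, hy⟩
  have hx0 : x ≠ 0 := by rintro rfl; obtain ⟨w, hw⟩ := hodd.1; omega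
  obtain ⟨k, hk⟩ : ∃ k : ℤ, x + y = 2 * k := by
    obtain ⟨a, ha⟩ := hodd.1; obtain ⟨b, hb⟩ := hodd.2
    exact ⟨a + b + 1, by omega⟩
  have hkm : z ^ 3 = k * (x ^ 2 - x * y + y ^ 2) := by
    have h2 : 2 * z ^ 3 = 2 * (k * (x ^ 2 - x * y + y ^ 2)) := by
      rw [← heq]; linear_combination (x ^ 2 - x * y + y ^ 2) * hk
    exact mul_left_cancel₀ (by norm_num : (2:ℤ) ≠ 0) h2
  have hmpos : 0 < x ^ 2 - x * y + y ^ 2 := by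
    have h1 : 1 ≤ x ^ 2 := by
      rcases lt_or_gt_of_ne hx0 with h | h <;> nlinarith
    nlinarith [sq_nonneg (2*y - x)]
  have hkne : k ≠ 0 := by
    rintro rfl
    rw [mul_comm, mul_zero] at hkm
    exact hz ((pow_eq_zero_iff (by norm_num : 3 ≠ 0)).mp hkm)
  have hkx : IsCoprime k x := by
    obtain ⟨s, t, hst⟩ := hco
    exact ⟨2*t, s - t, by linear_combination hst - t * hk⟩
  have hky : IsCoprime k y := by
    obtain ⟨s, t, hst⟩ := hco
    exact ⟨2*s, t - s, by linear_combination hst - s * hk⟩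
  -- base case |z| ≤ 1
  by_cases hz1 : z.natAbs ≤ 1
  · have hz11 : z = 1 ∨ z = -1 := by omega
    have hmd : (x ^ 2 - x * y + y ^ 2) ∣ z ^ 3 := Dvd.intro_left k hkm.symm
    have hmd1 : (x ^ 2 - x * y + y ^ 2) ∣ 1 := by
      rcases hz11 with rfl | rfl
      · simpa using hmd
      · rw [show ((-1:ℤ))^3 = -1 by norm_num] at hmd
        exact (dvd_neg).mp hmd
    have hm1 : x ^ 2 - x * y + y ^ 2 = 1 :=
      Int.eq_one_of_dvd_one (le_of_lt hmpos) hmd1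
    have hkz : k = z ^ 3 := by rw [hkm, hm1]; ring
    have hk2 : k ^ 2 = 1 := by
      rcases hz11 with rfl | rfl <;> rw [hkz] <;> norm_num
    have h30 : 3 * (x - y) ^ 2 = 0 := by
      linear_combination (-(x+y+2*k))*hk + 4*hm1 - 4*hk2
    have : (x - y) ^ 2 = 0 := by linarith
    have := pow_eq_zero_iff (n := 2) (by norm_num) |>.mp this
    linarith
  -- main case |z| ≥ 2
  have hz2 : 2 ≤ |z| := by rw [Int.abs_eq_natAbs]; omega
  by_cases h3k : (3:ℤ) ∣ k
  case neg =>
    -- CASE A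
    have hk3 : IsCoprime k (-3 : ℤ) :=
      ((coprime_of_prime_not_dvd hprime3 h3k).symm).neg_right
    have hkxy : IsCoprime k (x * y) := hkx.mul_right hky
    have hkm' : IsCoprime k (x ^ 2 - x * y + y ^ 2) := by
      have h := (hk3.mul_right hkxy).add_mul_left_right (4 * k)
      rwa [show -3 * (x*y) + k * (4*k) = x^2 - x*y + y^2 - (x+y-2*k)*(x+y+2*k) by ring,
        show x + y - 2*k = 0 by linarith [hk], zero_mul, sub_zero] at h
    obtain ⟨⟨a, hak⟩, ⟨b, hbm⟩⟩ := int_cube_of_coprime' hkm' hkm.symm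
    obtain ⟨c, d, hxc, hyc, hbc⟩ := cube_param hodd.1 hodd.2 hco hbm
    have hane : a ≠ 0 := by rintro rfl; simp at hak; exact hkne hak
    have hb1 : 1 ≤ b := by nlinarith [hmpos, hbm, sq_nonneg b, sq_nonneg (b+1), sq_nonneg (b-1)]
    have hzab : z = a * b := by
      apply cube_eq_cube
      rw [hkm, hak, hbm]; ring
    have hbz : b ≤ |z| := b_le_abs hzab hane hb1
    -- coprimality of c, d
    have hccd : IsCoprime c d := by
      obtain ⟨u1, v1, huv1⟩ := hco
      rw [hxc, hyc] at huv1
      exact ⟨u1*(c^2-3*d^2) + v1*(c^2 - 3*c*d), u1*d^2 + v1*d^2, by linear_combination huv1⟩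
    -- the three factors
    have h2k : 2 * k = (c+d) * (2*c-d) * (c-2*d) := by
      have hxy2k : x + y = 2*k := hk
      rw [hxc, hyc] at hxy2k
      linear_combination - hxy2k
    have hf1dvd : (c+d) ∣ 2*k := ⟨(2*c-d)*(c-2*d), by linear_combination h2k⟩
    have hf2dvd : (2*c-d) ∣ 2*k := ⟨(c+d)*(c-2*d), by linear_combination h2k⟩
    have hf3dvd : (c-2*d) ∣ 2*k := ⟨(c+d)*(2*c-d), by linear_combination h2k⟩
    have h3f : ∀ f : ℤ, f ∣ 2 * k → ¬ (3:ℤ) ∣ f := by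
      intro f hf h3
      rcases hprime3.dvd_mul.mp (h3.trans hf) with h | h
      · norm_num at h
      · exact h3k h
    have gd3 : ∀ f g : ℤ, (Int.gcd f g : ℤ) ∣ 3*c → (Int.gcd f g : ℤ) ∣ 3*d →
        f ∣ 2*k → IsCoprime f g := by
      intro f g hgc hgd hfd
      exact coprime_of_gcd_dvd_three (gcd_dvd_three hccd hgc hgd) (h3f f hfd)
    have hco12 : IsCoprime (c+d) (2*c-d) := by
      apply gd3 _ _ ?_ ?_ hf1dvd
      · have h := dvd_add (Int.gcd_dvd_left (a := c+d) (b := 2*c-d)) (Int.gcd_dvd_right _ _)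
        rwa [show (c+d) + (2*c-d) = 3*c by ring] at h
      · have h := dvd_sub ((Int.gcd_dvd_left (a := c+d) (b := 2*c-d)).mul_left 2)
          (Int.gcd_dvd_right _ _)
        rwa [show 2*(c+d) - (2*c-d) = 3*d by ring] at h
    have hco13 : IsCoprime (c+d) (c-2*d) := by
      apply gd3 _ _ ?_ ?_ hf1dvd
      · have h := dvd_add ((Int.gcd_dvd_left (a := c+d) (b := c-2*d)).mul_left 2)
          (Int.gcd_dvd_right _ _)
        rwa [show 2*(c+d) + (c-2*d) = 3*c by ring] at h
      · have h := dvd_sub (Int.gcd_dvd_left (a := c+d) (b := c-2*d)) (Int.gcd_dvd_right _ _)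
        rwa [show (c+d) - (c-2*d) = 3*d by ring] at h
    have hco23 : IsCoprime (2*c-d) (c-2*d) := by
      apply gd3 _ _ ?_ ?_ hf2dvd
      · have h := dvd_sub ((Int.gcd_dvd_left (a := 2*c-d) (b := c-2*d)).mul_left 2)
          (Int.gcd_dvd_right _ _)
        rwa [show 2*(2*c-d) - (c-2*d) = 3*c by ring] at h
      · have h := dvd_sub (Int.gcd_dvd_left (a := 2*c-d) (b := c-2*d))
          ((Int.gcd_dvd_right (a := 2*c-d) (b := c-2*d)).mul_left 2)
        rwa [show (2*c-d) - 2*(c-2*d) = 3*d by ring] at h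
    rcases Int.even_or_odd c with hc | hc <;> rcases Int.even_or_odd d with hd | hd
    · -- both even : impossible
      exfalso
      obtain ⟨u2, v2, huv2⟩ := hccd
      obtain ⟨p, hp⟩ := hc; obtain ⟨q, hq⟩ := hd
      have : (2:ℤ) ∣ 1 := ⟨u2*p + v2*q, by rw [← huv2, hp, hq]; ring⟩
      norm_num at this
    · -- c even, d odd : f3 = c - 2d even
      obtain ⟨l, hl⟩ := hc
      have hg : c - 2*d = 2*(l - d) := by omega
      have hprod : (l - d) * (c+d) * (2*c-d) = a^3 := by
        apply mul_left_cancel₀ (by norm_num : (2:ℤ) ≠ 0)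
        rw [← hak]
        linear_combination - h2k - (c+d)*(2*c-d)*hg
      obtain ⟨r1, s, t, hg1r, hf1s, hf2t⟩ := cube3 hprod
        (hco13.symm.of_isCoprime_of_dvd_left ⟨2, by omega⟩)
        (hco23.symm.of_isCoprime_of_dvd_left ⟨2, by omega⟩) hco12
      have hr1ne : r1 ≠ 0 := by
        rintro rfl
        norm_num at hg1r
        rw [show c - 2*d = 0 by omega, mul_zero] at h2k
        exact hkne (by omega)
      have heqn : t^3 + (-s)^3 = 2*r1^3 := by
        linear_combination - hf2t + hf1s + hg + 2*hg1r
      have hcots : IsCoprime t (-s) := by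
        have h := hco12
        rw [hf1s, hf2t] at h
        exact (isCoprime_pow3 h).symm.neg_right
      have hsq : (c - 2*d)^2 ≤ 4*b := by rw [hbc]; nlinarith [sq_nonneg c]
      have hcr : c - 2*d = 2*r1^3 := by rw [hg, hg1r]
      have hr6 : r1^6 ≤ b := by rw [hcr] at hsq; nlinarith [hsq]
      have hst_eq : t = -s := IH r1.natAbs
        (by have := size_step hz2 hr6 hbz; omega) t (-s) r1 hr1ne (le_refl _) hcots heqn
      have h5 : 2*c - d = -(c + d) := by
        rw [hf2t, hst_eq, show (-s)^3 = -s^3 by ring, ← hf1s]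
      have hc0 : c = 0 := by linarith
      rw [hxc, hyc, hc0]; ring
    · -- c odd, d even : f2 = 2c - d even
      obtain ⟨l, hl⟩ := hd
      have hg : 2*c - d = 2*(c - l) := by omega
      have hprod : (c - l) * (c+d) * (c-2*d) = a^3 := by
        apply mul_left_cancel₀ (by norm_num : (2:ℤ) ≠ 0)
        rw [← hak]
        linear_combination - h2k - (c+d)*(c-2*d)*hg
      obtain ⟨r1, s, t, hg1r, hf1s, hf3t⟩ := cube3 hprod
        (hco12.symm.of_isCoprime_of_dvd_left ⟨2, by omega⟩)
        (hco23.of_isCoprime_of_dvd_left ⟨2, by omega⟩) hco13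
      have hr1ne : r1 ≠ 0 := by
        rintro rfl
        norm_num at hg1r
        rw [show 2*c - d = 0 by omega] at h2k
        rw [mul_zero, zero_mul] at h2k
        exact hkne (by omega)
      have heqn : s^3 + t^3 = 2*r1^3 := by
        linear_combination - hf1s - hf3t + hg + 2*hg1r
      have hcost : IsCoprime s t := by
        have h := hco13
        rw [hf1s, hf3t] at h
        exact isCoprime_pow3 h
      have hsq : (2*c - d)^2 ≤ 4*b := by rw [hbc]; nlinarith [sq_nonneg d]
      have hcr : 2*c - d = 2*r1^3 := by rw [hg, hg1r]
      have hr6 : r1^6 ≤ b := by rw [hcr] at hsq; nlinarith [hsq]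
      have hst_eq : s = t := IH r1.natAbs
        (by have := size_step hz2 hr6 hbz; omega) s t r1 hr1ne (le_refl _) hcost heqn
      have h5 : c + d = c - 2*d := by rw [hf1s, hst_eq, ← hf3t]
      have hd0 : d = 0 := by linarith
      rw [hxc, hyc, hd0]; ring
    · -- both odd : f1 = c + d even
      obtain ⟨p, hp⟩ := hc; obtain ⟨q, hq⟩ := hd
      have hg : c + d = 2*(p + q + 1) := by omega
      have hprod : (p + q + 1) * (2*c-d) * (c-2*d) = a^3 := by
        apply mul_left_cancel₀ (by norm_num : (2:ℤ) ≠ 0)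
        rw [← hak]
        linear_combination - h2k - (2*c-d)*(c-2*d)*hg
      obtain ⟨r1, s, t, hg1r, hf2s, hf3t⟩ := cube3 hprod
        (hco12.of_isCoprime_of_dvd_left ⟨2, by omega⟩)
        (hco13.of_isCoprime_of_dvd_left ⟨2, by omega⟩) hco23
      have hr1ne : r1 ≠ 0 := by
        rintro rfl
        norm_num at hg1r
        rw [show c + d = 0 by omega, zero_mul, zero_mul] at h2k
        exact hkne (by omega)
      have heqn : s^3 + (-t)^3 = 2*r1^3 := by
        linear_combination - hf2s + hf3t + hg + 2*hg1r
      have hcost : IsCoprime s (-t) := by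
        have h := hco23
        rw [hf2s, hf3t] at h
        exact (isCoprime_pow3 h).neg_right
      have hsq : (c + d)^2 ≤ 4*b := by rw [hbc]; nlinarith [sq_nonneg (c - d)]
      have hcr : c + d = 2*r1^3 := by rw [hg, hg1r]
      have hr6 : r1^6 ≤ b := by rw [hcr] at hsq; nlinarith [hsq]
      have hst_eq : s = -t := IH r1.natAbs
        (by have := size_step hz2 hr6 hbz; omega) s (-t) r1 hr1ne (le_refl _) hcost heqn
      have h5 : 2*c - d = -(c - 2*d) := by
        rw [hf2s, hst_eq, show (-t)^3 = -t^3 by ring, ← hf3t]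
      have hcd0 : c = d := by linarith
      rw [hxc, hyc, hcd0]; ring
  case pos =>
    obtain ⟨r, hkr⟩ := h3k
    have h6r : x + y = 6 * r := by omega
    have hrne : r ≠ 0 := by rintro rfl; exact hkne (by omega)
    have h3x : ¬ (3:ℤ) ∣ x := by
      intro h
      have h3y : (3:ℤ) ∣ y := by
        have hy6 : y = 6*r - x := by omega
        rw [hy6]; exact dvd_sub ⟨2*r, by ring⟩ h
      obtain ⟨s, t, hst⟩ := hco
      have h31 : (3:ℤ) ∣ 1 := by
        rw [← hst]; exact dvd_add (h.mul_left s) (h3y.mul_left t)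
      norm_num at h31
    have h3y : ¬ (3:ℤ) ∣ y := by
      intro h
      have h3x' : (3:ℤ) ∣ x := by
        have hx6 : x = 6*r - y := by omega
        rw [hx6]; exact dvd_sub ⟨2*r, by ring⟩ h
      exact h3x h3x'
    have hm' : x^2 - x*y + y^2 = 3 * (12*r^2 - x*y) := by
      linear_combination (x + y + 6*r) * h6r
    have hz9 : z^3 = 9*r*(12*r^2 - x*y) := by
      rw [hkm, hkr]; linear_combination 3*r*hm'
    have hm'pos : 0 < 12*r^2 - x*y := by linarith
    have h3m' : ¬ (3:ℤ) ∣ (12*r^2 - x*y) := by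
      intro h
      obtain ⟨w, hw⟩ := h
      have hxy3 : (3:ℤ) ∣ x*y := ⟨4*r^2 - w, by linarith⟩
      rcases hprime3.dvd_mul.mp hxy3 with h | h
      · exact h3x h
      · exact h3y h
    have hco3m : IsCoprime (3:ℤ) (12*r^2 - x*y) := coprime_of_prime_not_dvd hprime3 h3m'
    have hrx : IsCoprime r x := hkx.of_isCoprime_of_dvd_left ⟨3, by omega⟩
    have hry : IsCoprime r y := hky.of_isCoprime_of_dvd_left ⟨3, by omega⟩
    have hrm' : IsCoprime r (12*r^2 - x*y) := by
      have h := ((hrx.mul_right hry).neg_right).add_mul_left_right (12*r)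
      rwa [show -(x*y) + r*(12*r) = 12*r^2 - x*y by ring] at h
    have h9rm : IsCoprime (9*r) (12*r^2 - x*y) := by
      have h9 : IsCoprime (9:ℤ) (12*r^2 - x*y) := by
        have h := hco3m.mul_left hco3m
        rwa [show (3:ℤ)*3 = 9 by norm_num] at h
      exact h9.mul_left hrm'
    obtain ⟨⟨a, ha9⟩, ⟨b, hbm⟩⟩ := int_cube_of_coprime' h9rm hz9.symm
    have hXodd : Odd (x - 2*r) := by obtain ⟨w, hw⟩ := hodd.1; exact ⟨w - r, by omega⟩
    have hYodd : Odd (x - 4*r) := by obtain ⟨w, hw⟩ := hodd.1; exact ⟨w - 2*r, by omega⟩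
    have hcoXY : IsCoprime (x - 2*r) (x - 4*r) := by
      rw [Int.isCoprime_iff_gcd_eq_one]
      have hG1 : (Int.gcd (x-2*r) (x-4*r) : ℤ) ∣ (x - 2*r) := Int.gcd_dvd_left _ _
      have hG2 : (Int.gcd (x-2*r) (x-4*r) : ℤ) ∣ (x - 4*r) := Int.gcd_dvd_right _ _
      have h2x : (Int.gcd (x-2*r) (x-4*r) : ℤ) ∣ 2*x := by
        have h := dvd_sub (hG1.mul_left 4) (hG2.mul_left 2)
        rwa [show 4*(x-2*r) - 2*(x-4*r) = 2*x by ring] at h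
      have h2y : (Int.gcd (x-2*r) (x-4*r) : ℤ) ∣ 2*y := by
        have h := dvd_sub (hG1.mul_left 2) (hG2.mul_left 4)
        rwa [show 2*(x-2*r) - 4*(x-4*r) = -2*x + 12*r by ring,
          show -2*x + 12*r = 2*y by omega] at h
      obtain ⟨s, t, hst⟩ := hco
      have h2 : (Int.gcd (x-2*r) (x-4*r) : ℤ) ∣ 2 := by
        have h := dvd_add (h2x.mul_left s) (h2y.mul_left t)
        rwa [show s*(2*x) + t*(2*y) = 2*(s*x+t*y) by ring, hst, mul_one] at h
      have h2' : Int.gcd (x-2*r) (x-4*r) ∣ 2 := by exact_mod_cast h2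
      rcases (Nat.dvd_prime Nat.prime_two).mp h2' with h1 | h1
      · exact h1
      · exfalso
        rw [h1] at hG1
        have h2X : (2:ℤ) ∣ (x - 2*r) := by exact_mod_cast hG1
        obtain ⟨w1, hw1⟩ := h2X
        obtain ⟨w2, hw2⟩ := hXodd
        omega
    have hXYb : (x-2*r)^2 - (x-2*r)*(x-4*r) + (x-4*r)^2 = b^3 := by
      have hy6 : y = 6*r - x := by omega
      linear_combination hbm + x*hy6
    obtain ⟨c, d, hXc, hYc, hbc⟩ := cube_param hXodd hYodd hcoXY hXYb
    have h2r : 2*r = 3*c^2*d - 3*c*d^2 := by linear_combination hXc - hYc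
    have h3a : (3:ℤ) ∣ a := hprime3.dvd_of_dvd_pow (n := 3) ⟨3*r, by linarith [ha9]⟩
    obtain ⟨a1, rfl⟩ := h3a
    have hr3a : r = 3*a1^3 := by
      have h9 : 9*r = 9*(3*a1^3) := by linear_combination ha9
      linarith
    have ha1ne : a1 ≠ 0 := by rintro rfl; norm_num at hr3a; exact hrne hr3a
    have hcd3 : c*d*(c-d) = 2*a1^3 := by
      have h3' : 3*(c*d*(c-d)) = 3*(2*a1^3) := by linear_combination - h2r + 2*hr3a
      exact mul_left_cancel₀ (by norm_num : (3:ℤ) ≠ 0) h3'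
    have hccd : IsCoprime c d := by
      obtain ⟨u1, v1, huv1⟩ := hcoXY
      rw [hXc, hYc] at huv1
      exact ⟨u1*(c^2-3*d^2) + v1*(c^2 - 3*c*d), u1*d^2 + v1*d^2, by linear_combination huv1⟩
    have hc_cd : IsCoprime c (c - d) := by
      have h := (hccd.neg_right).add_mul_left_right 1
      rwa [show -d + c*1 = c - d by ring] at h
    have hd_cd : IsCoprime d (c - d) := by
      have h := ((hccd.symm.neg_right).add_mul_left_right 1).neg_right
      rwa [show -(-c + d*1) = c - d by ring] at h
    have hb1 : 1 ≤ b := by nlinarith [hm'pos, hbm, sq_nonneg b, sq_nonneg (b+1), sq_nonneg (b-1)]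
    have hzab : z = (3*a1) * b := by
      apply cube_eq_cube
      rw [hz9, show (9:ℤ)*r*(12*r^2 - x*y) = (9*r)*(12*r^2-x*y) by ring, ha9, hbm]
      ring
    have hane : (3*a1) ≠ 0 := by simp [ha1ne]
    have hbz : b ≤ |z| := b_le_abs hzab hane hb1
    rcases Int.even_or_odd c with hc | hc <;> rcases Int.even_or_odd d with hd | hd
    · -- both even : impossible
      exfalso
      obtain ⟨u2, v2, huv2⟩ := hccd
      obtain ⟨p, hp⟩ := hc; obtain ⟨q, hq⟩ := hd
      have : (2:ℤ) ∣ 1 := ⟨u2*p + v2*q, by rw [← huv2, hp, hq]; ring⟩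
      norm_num at this
    · -- c even, d odd
      obtain ⟨l, hl⟩ := hc
      have hprod : l * d * (c-d) = a1^3 := by
        apply mul_left_cancel₀ (by norm_num : (2:ℤ) ≠ 0)
        rw [← hcd3]
        linear_combination - d*(c-d)*hl
      obtain ⟨r1, s, t, hg1r, hds, hcdt⟩ := cube3 hprod
        (hccd.of_isCoprime_of_dvd_left ⟨2, by omega⟩)
        (hc_cd.of_isCoprime_of_dvd_left ⟨2, by omega⟩) hd_cd
      have hr1ne : r1 ≠ 0 := by
        rintro rfl
        norm_num at hg1r
        have hc0 : c = 0 := by omega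
        rw [hc0] at hcd3
        have h0 : a1^3 = 0 := by linarith [hcd3]
        exact ha1ne ((pow_eq_zero_iff (by norm_num : 3 ≠ 0)).mp h0)
      have heqn : s^3 + t^3 = 2*r1^3 := by
        linear_combination - hds - hcdt + hl + 2*hg1r
      have hcost : IsCoprime s t := by
        have h := hd_cd
        rw [hcdt, hds] at h
        exact isCoprime_pow3 h
      have hsq : c^2 ≤ 4*b := by rw [hbc]; nlinarith [sq_nonneg (c - 2*d), sq_nonneg c]
      have hcr : c = 2*r1^3 := by rw [hl, hg1r]; ring
      have hr6 : r1^6 ≤ b := by rw [hcr] at hsq; nlinarith [hsq]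
      have hst_eq : s = t := IH r1.natAbs
        (by have := size_step hz2 hr6 hbz; omega) s t r1 hr1ne (le_refl _) hcost heqn
      have hc2d : c = 2*d := by
        linear_combination hcdt - hds - (s^2 + s*t + t^2)*hst_eq
      have hX3 : x - 2*r = 3*d^3 := by linear_combination hXc + (c^2+2*c*d+d^2)*hc2d
      have hY3 : x - 4*r = -(3*d^3) := by linear_combination hYc + (c^2-c*d-2*d^2)*hc2d
      exfalso
      obtain ⟨u2, v2, huv2⟩ := hcoXY
      rw [hX3, hY3] at huv2
      have : (3:ℤ) ∣ 1 := ⟨u2*d^3 - v2*d^3, by linear_combination - huv2⟩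
      norm_num at this
    · -- c odd, d even
      obtain ⟨l, hl⟩ := hd
      have hprod : l * c * (c-d) = a1^3 := by
        apply mul_left_cancel₀ (by norm_num : (2:ℤ) ≠ 0)
        rw [← hcd3]
        linear_combination - c*(c-d)*hl
      obtain ⟨r1, s, t, hg1r, hcs, hcdt⟩ := cube3 hprod
        (hccd.symm.of_isCoprime_of_dvd_left ⟨2, by omega⟩)
        (hd_cd.of_isCoprime_of_dvd_left ⟨2, by omega⟩) hc_cd
      have hr1ne : r1 ≠ 0 := by
        rintro rfl
        norm_num at hg1r
        have hd0 : d = 0 := by omega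
        rw [hd0] at hcd3
        have h0 : a1^3 = 0 := by linarith [hcd3]
        exact ha1ne ((pow_eq_zero_iff (by norm_num : 3 ≠ 0)).mp h0)
      have heqn : s^3 + (-t)^3 = 2*r1^3 := by
        linear_combination - hcs + hcdt + hl + 2*hg1r
      have hcost : IsCoprime s (-t) := by
        have h := hc_cd
        rw [hcdt, hcs] at h
        exact (isCoprime_pow3 h).neg_right
      have hsq : d^2 ≤ 4*b := by rw [hbc]; nlinarith [sq_nonneg (2*c - d), sq_nonneg d]
      have hcr : d = 2*r1^3 := by rw [hl, hg1r]; ring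
      have hr6 : r1^6 ≤ b := by rw [hcr] at hsq; nlinarith [hsq]
      have hst_eq : s = -t := IH r1.natAbs
        (by have := size_step hz2 hr6 hbz; omega) s (-t) r1 hr1ne (le_refl _) hcost heqn
      have hd2c : d = 2*c := by
        linear_combination - hcs - hcdt - (s^2 - s*t + t^2)*hst_eq
      have hX3 : x - 2*r = -(3*c^3) := by linear_combination hXc + (d^2-c*d-2*c^2)*hd2c
      have hY3 : x - 4*r = 3*c^3 := by linear_combination hYc + (d^2+2*c*d+c^2)*hd2c
      exfalso
      obtain ⟨u2, v2, huv2⟩ := hcoXY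
      rw [hX3, hY3] at huv2
      have : (3:ℤ) ∣ 1 := ⟨v2*c^3 - u2*c^3, by linear_combination - huv2⟩
      norm_num at this
    · -- both odd
      obtain ⟨p, hp⟩ := hc; obtain ⟨q, hq⟩ := hd
      have hl : c - d = 2*(p - q) := by omega
      have hprod : (p - q) * c * d = a1^3 := by
        apply mul_left_cancel₀ (by norm_num : (2:ℤ) ≠ 0)
        rw [← hcd3]
        linear_combination - c*d*hl
      obtain ⟨r1, s, t, hg1r, hcs, hdt⟩ := cube3 hprod
        (hc_cd.symm.of_isCoprime_of_dvd_left ⟨2, by omega⟩)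
        (hd_cd.symm.of_isCoprime_of_dvd_left ⟨2, by omega⟩) hccd
      have hr1ne : r1 ≠ 0 := by
        rintro rfl
        norm_num at hg1r
        have hcd0 : c - d = 0 := by omega
        rw [show c*d*(c-d) = (c-d)*(c*d) by ring, hcd0, zero_mul] at hcd3
        have h0 : a1^3 = 0 := by linarith [hcd3]
        exact ha1ne ((pow_eq_zero_iff (by norm_num : 3 ≠ 0)).mp h0)
      have heqn : s^3 + (-t)^3 = 2*r1^3 := by
        linear_combination - hcs + hdt + hl + 2*hg1r
      have hcost : IsCoprime s (-t) := by
        have h := hccd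
        rw [hcs, hdt] at h
        exact (isCoprime_pow3 h).neg_right
      have hsq : (c-d)^2 ≤ 4*b := by rw [hbc]; nlinarith [sq_nonneg (c-d), sq_nonneg c, sq_nonneg d]
      have hcr : c - d = 2*r1^3 := by rw [hl, hg1r]
      have hr6 : r1^6 ≤ b := by rw [hcr] at hsq; nlinarith [hsq]
      have hst_eq : s = -t := IH r1.natAbs
        (by have := size_step hz2 hr6 hbz; omega) s (-t) r1 hr1ne (le_refl _) hcost heqn
      have hcd0 : c + d = 0 := by
        linear_combination hcs + hdt + (s^2 - s*t + t^2)*hst_eq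
      have hX3 : x - 2*r = 3*d^3 := by linear_combination hXc + (c^2-c*d-2*d^2)*hcd0
      have hY3 : x - 4*r = -(3*d^3) := by linear_combination hYc + (c^2-4*c*d+4*d^2)*hcd0
      exfalso
      obtain ⟨u2, v2, huv2⟩ := hcoXY
      rw [hX3, hY3] at huv2
      have : (3:ℤ) ∣ 1 := ⟨u2*d^3 - v2*d^3, by linear_combination - huv2⟩
      norm_num at this

end Descent

theorem classical_2u3_minus_v3 :
    (¬ ∃ α : ℤ, α ≠ 0 ∧ α ≠ 1 ∧ (∃ u : ℤ, α = u ^ 3) ∧ (∃ v : ℤ, 2 * α - 1 = v ^ 3)) ∧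
    (∀ u v : ℤ, 2 * u ^ 3 - v ^ 3 = 1 → (u = 1 ∧ v = 1) ∨ (u = 0 ∧ v = -1)) := by
  have main : ∀ u v : ℤ, 2 * u ^ 3 - v ^ 3 = 1 → (u = 1 ∧ v = 1) ∨ (u = 0 ∧ v = -1) := by
    intro u v h
    by_cases hu : u = 0
    · right
      refine ⟨hu, ?_⟩
      rw [hu] at h
      norm_num at h
      have hv3 : v ^ 3 = (-1 : ℤ) ^ 3 := by norm_num; linarith
      exact cube_eq_cube hv3
    · left
      have hco : IsCoprime v (1:ℤ) := isCoprime_one_right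
      have heq : v ^ 3 + 1 ^ 3 = 2 * u ^ 3 := by linarith
      have hv1 : v = 1 := descent u.natAbs v 1 u hu (le_refl _) hco heq
      refine ⟨?_, hv1⟩
      have hu3 : u ^ 3 = 1 := by rw [hv1] at h; linarith
      exact cube_eq_cube (a := u) (b := 1) (by rw [hu3]; norm_num)
  refine ⟨?_, main⟩
  rintro ⟨α, hα0, hα1, ⟨u, hu⟩, ⟨v, hv⟩⟩
  have h : 2 * u ^ 3 - v ^ 3 = 1 := by rw [← hu, ← hv]; ring
  rcases main u v h with ⟨hu1, _⟩ | ⟨hu0, _⟩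
  · exact hα1 (by rw [hu, hu1]; norm_num)
  · exact hα0 (by rw [hu, hu0]; norm_num)
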